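/- arXiv:2007.08295 — 2 statements merged into one kernel-verified Lean document; each statement's English description precedes it below -/
import Mathlib

section
/- The polynomials C_{n,λ} and S_{n,λ} satisfy the addition theorem C_{n,λ}(x₁+x₂, y₁+y₂) = Σ_{k=0}^n binom(n,k) [ C_{n-k,λ}(x₁,y₁) C_{k,λ}(x₂,y₂) − S_{n-k,λ}(x₁,y₁) S_{k,λ}(x₂,y₂) ]. -/
/-- The degenerate falling factorial with complex argument:
`(z)_{n,λ} = ∏_{j=0}^{n-1} (z - jλ)`. -/
noncomputable def degFallC (z : ℂ) (lam : ℝ) (n : ℕ) : ℂ :=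
  ∏ j ∈ Finset.range n, (z - (j : ℂ) * (lam : ℂ))

/-- `C_{n,λ}(x,y) = (1/2) Σ_{k=0}^n C(n,k) (x)_{n-k,λ} ((iy)_{k,λ} + (−iy)_{k,λ})`. -/
noncomputable def Cpoly (lam x y : ℝ) (n : ℕ) : ℂ :=
  (1 / 2) * ∑ k ∈ Finset.range (n + 1), (n.choose k : ℂ) * degFallC (x : ℂ) lam (n - k) *
    (degFallC (Complex.I * y) lam k + degFallC (-(Complex.I * y)) lam k)

/-- `S_{n,λ}(x,y) = (1/(2i)) Σ_{k=0}^n C(n,k) (x)_{n-k,λ} ((iy)_{k,λ} − (−iy)_{k,λ})`. -/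
noncomputable def Spoly (lam x y : ℝ) (n : ℕ) : ℂ :=
  (1 / (2 * Complex.I)) * ∑ k ∈ Finset.range (n + 1), (n.choose k : ℂ) *
    degFallC (x : ℂ) lam (n - k) *
    (degFallC (Complex.I * y) lam k - degFallC (-(Complex.I * y)) lam k)

lemma degFallC_succ (z : ℂ) (lam : ℝ) (n : ℕ) :
    degFallC z lam (n + 1) = degFallC z lam n * (z - (n : ℂ) * (lam : ℂ)) :=
  Finset.prod_range_succ _ _

/-- Chu–Vandermonde for the degenerate falling factorial (antidiagonal form). -/
lemma degFallC_add_antidiagonal (a b : ℂ) (lam : ℝ) (n : ℕ) :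
    degFallC (a + b) lam n = ∑ ij ∈ Finset.HasAntidiagonal.antidiagonal n,
      (n.choose ij.1 : ℂ) * (degFallC a lam ij.1 * degFallC b lam ij.2) := by
  induction n with
  | zero => simp [degFallC]
  | succ n ih =>
    rw [degFallC_succ, ih, Finset.sum_antidiagonal_choose_succ_mul
      (fun i j => degFallC a lam i * degFallC b lam j) n, ← Finset.sum_add_distrib,
      Finset.sum_mul]
    refine Finset.sum_congr rfl ?_
    intro ij hij
    have h : ij.1 + ij.2 = n := Finset.HasAntidiagonal.mem_antidiagonal.mp hij
    have hc : (n.choose ij.2 : ℂ) = (n.choose ij.1 : ℂ) := by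
      norm_cast
      exact Nat.choose_symm_of_eq_add (by omega)
    have hn : (ij.1 : ℂ) + (ij.2 : ℂ) = (n : ℂ) := by exact_mod_cast congrArg Nat.cast h
    rw [degFallC_succ, degFallC_succ, hc]
    linear_combination ((n.choose ij.1 : ℂ) * (degFallC a lam ij.1 * degFallC b lam ij.2)
      * (lam : ℂ)) * hn

/-- Chu–Vandermonde for the degenerate falling factorial (range form). -/
lemma degFallC_add (a b : ℂ) (lam : ℝ) (n : ℕ) :
    degFallC (a + b) lam n = ∑ k ∈ Finset.range (n + 1),
      (n.choose k : ℂ) * degFallC a lam (n - k) * degFallC b lam k := by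
  rw [show a + b = b + a from add_comm a b, degFallC_add_antidiagonal,
    Finset.Nat.sum_antidiagonal_eq_sum_range_succ_mk]
  refine Finset.sum_congr rfl fun k hk => ?_
  show (n.choose k : ℂ) * (degFallC b lam k * degFallC a lam (n - k)) = _
  ring

lemma Cpoly_eq (lam x y : ℝ) (n : ℕ) :
    Cpoly lam x y n =
      (degFallC ((x : ℂ) + Complex.I * y) lam n
        + degFallC ((x : ℂ) - Complex.I * y) lam n) / 2 := by
  rw [show ((x : ℂ) - Complex.I * y) = (x : ℂ) + -(Complex.I * y) from sub_eq_add_neg _ _,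
    degFallC_add, degFallC_add, Cpoly, ← Finset.sum_add_distrib, Finset.mul_sum,
    Finset.sum_div]
  refine Finset.sum_congr rfl fun k _ => ?_
  ring

lemma Spoly_eq (lam x y : ℝ) (n : ℕ) :
    Spoly lam x y n =
      (degFallC ((x : ℂ) + Complex.I * y) lam n
        - degFallC ((x : ℂ) - Complex.I * y) lam n) / (2 * Complex.I) := by
  rw [show ((x : ℂ) - Complex.I * y) = (x : ℂ) + -(Complex.I * y) from sub_eq_add_neg _ _,
    degFallC_add, degFallC_add, Spoly, ← Finset.sum_sub_distrib, Finset.mul_sum,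
    Finset.sum_div]
  refine Finset.sum_congr rfl fun k _ => ?_
  ring

theorem Cpoly_addition (lam x₁ x₂ y₁ y₂ : ℝ) (n : ℕ) :
    Cpoly lam (x₁ + x₂) (y₁ + y₂) n =
      ∑ k ∈ Finset.range (n + 1), (n.choose k : ℂ) *
        (Cpoly lam x₁ y₁ (n - k) * Cpoly lam x₂ y₂ k -
          Spoly lam x₁ y₁ (n - k) * Spoly lam x₂ y₂ k) := by
  have e1 : ((x₁ + x₂ : ℝ) : ℂ) + Complex.I * ((y₁ + y₂ : ℝ) : ℂ)
      = ((x₁ : ℂ) + Complex.I * y₁) + ((x₂ : ℂ) + Complex.I * y₂) := by push_cast; ring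
  have e2 : ((x₁ + x₂ : ℝ) : ℂ) - Complex.I * ((y₁ + y₂ : ℝ) : ℂ)
      = ((x₁ : ℂ) - Complex.I * y₁) + ((x₂ : ℂ) - Complex.I * y₂) := by push_cast; ring
  rw [Cpoly_eq, e1, e2, degFallC_add, degFallC_add, ← Finset.sum_add_distrib,
    Finset.sum_div]
  refine Finset.sum_congr rfl fun k _ => ?_
  rw [Cpoly_eq, Cpoly_eq, Spoly_eq, Spoly_eq]
  have hI : Complex.I * Complex.I = -1 := Complex.I_mul_I
  field_simp
  linear_combination (1 * (n.choose k : ℂ) *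
    ((degFallC ((x₁ : ℂ) + Complex.I * y₁) lam (n - k)
      - degFallC ((x₁ : ℂ) - Complex.I * y₁) lam (n - k)) *
     (degFallC ((x₂ : ℂ) + Complex.I * y₂) lam k
      - degFallC ((x₂ : ℂ) - Complex.I * y₂) lam k))) * hI
end

section
/- The degenerate λ-Stirling polynomials of the second kind satisfy the summation identity Σ_{k=0}^{n} S_{2,λ}^{(x)}(n,k)(y)_k = (x+y)_{n,λ} for all real x, y, λ and n ≥ 0, equivalently, the identity e_λ^{(x+y)}(t) = Σ_{n≥0} [Σ_{k=0}^n S_{2,λ}^{(x)}(n,k)(y)_k] t^n/n! as formal power series. -/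
open PowerSeries

/-- The degenerate falling factorial `(x)_{n,λ} = ∏_{j=0}^{n-1} (x - jλ)`. -/
noncomputable def degFall (x lam : ℝ) (n : ℕ) : ℝ := ∏ j ∈ Finset.range n, (x - j * lam)

/-- The ordinary falling factorial `(t)_k = t(t-1)⋯(t-k+1)`. -/
noncomputable def fall (t : ℝ) (k : ℕ) : ℝ := ∏ j ∈ Finset.range k, (t - j)

/-- The formal power series `e_λ^x(t) = Σ_{n≥0} (x)_{n,λ} t^n/n!`. -/
noncomputable def degExpS (lam x : ℝ) : PowerSeries ℝ :=
  PowerSeries.mk fun n => degFall x lam n / n.factorial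

/-- The degenerate λ-Stirling polynomial of the second kind `S_{2,λ}^{(x)}(n,k)`,
defined as `n!` times the `t^n` coefficient of `(e_λ(t)-1)^k/k! · e_λ^x(t)`. -/
noncomputable def degStirling2 (lam x : ℝ) (n k : ℕ) : ℝ :=
  (n.factorial : ℝ) * PowerSeries.coeff n
    (PowerSeries.C (R := ℝ) (1 / k.factorial) * (degExpS lam 1 - 1) ^ k * degExpS lam x)

lemma degFall_succ (x lam : ℝ) (n : ℕ) :
    degFall x lam (n + 1) = degFall x lam n * (x - n * lam) :=
  Finset.prod_range_succ _ _

lemma vandermonde (x y lam : ℝ) : ∀ n : ℕ, degFall (x + y) lam n =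
    ∑ i ∈ Finset.range (n + 1), (n.choose i : ℝ) * degFall x lam i * degFall y lam (n - i)
  | 0 => by simp [degFall]
  | (n + 1) => by
    have IH := vandermonde x y lam n
    have key : ∑ i ∈ Finset.range (n + 2), ((n+1).choose i : ℝ) * degFall x lam i *
        degFall y lam (n + 1 - i) =
        ∑ i ∈ Finset.range (n + 1), (n.choose i : ℝ) * degFall x lam i * degFall y lam (n - i)
          * ((x - i * lam) + (y - (n - i : ℕ) * lam)) := by
      rw [Finset.sum_range_succ']
      have h1 : ∀ k ∈ Finset.range (n + 1),
          ((n+1).choose (k+1) : ℝ) * degFall x lam (k+1) * degFall y lam (n + 1 - (k+1)) =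
          (n.choose k : ℝ) * degFall x lam k * degFall y lam (n - k) * (x - k * lam)
          + (n.choose (k+1) : ℝ) * degFall x lam (k+1) * degFall y lam (n + 1 - (k+1)) := by
        intro k hk
        have hss : n + 1 - (k + 1) = n - k := by omega
        rw [Nat.choose_succ_succ n k, hss, degFall_succ x lam k]
        push_cast
        ring
      rw [Finset.sum_congr rfl h1, Finset.sum_add_distrib]
      have h2 : (∑ k ∈ Finset.range (n + 1),
          (n.choose (k+1) : ℝ) * degFall x lam (k+1) * degFall y lam (n + 1 - (k+1)))
          + ((n+1).choose 0 : ℝ) * degFall x lam 0 * degFall y lam (n + 1 - 0) =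
          ∑ i ∈ Finset.range (n + 1), (n.choose i : ℝ) * degFall x lam i *
            degFall y lam (n - i) * (y - (n - i : ℕ) * lam) := by
        have h3 : ∑ k ∈ Finset.range (n + 1),
            (n.choose (k+1) : ℝ) * degFall x lam (k+1) * degFall y lam (n + 1 - (k+1)) =
            ∑ k ∈ Finset.range n,
            (n.choose (k+1) : ℝ) * degFall x lam (k+1) * degFall y lam (n + 1 - (k+1)) := by
          rw [Finset.sum_range_succ, Nat.choose_succ_self]
          simp
        rw [h3]
        have h4 : ∀ i ∈ Finset.range (n+1),
            (n.choose i : ℝ) * degFall x lam i * degFall y lam (n - i) * (y - (n - i : ℕ) * lam)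
            = (n.choose i : ℝ) * degFall x lam i * degFall y lam (n + 1 - i) := by
          intro i hi
          have hi' : i ≤ n := Nat.lt_succ_iff.mp (Finset.mem_range.mp hi)
          have : n + 1 - i = (n - i) + 1 := by omega
          rw [this, degFall_succ]
          ring
        rw [Finset.sum_congr rfl h4, Finset.sum_range_succ']
        simp
      rw [add_assoc, h2, ← Finset.sum_add_distrib]
      apply Finset.sum_congr rfl
      intro i hi
      ring
    rw [key, degFall_succ, IH, Finset.sum_mul]
    apply Finset.sum_congr rfl
    intro i hi
    have hi' : i ≤ n := Nat.lt_succ_iff.mp (Finset.mem_range.mp hi)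
    have : ((n - i : ℕ) : ℝ) = (n : ℝ) - i := by
      push_cast [Nat.cast_sub hi']; ring
    rw [this]
    ring

lemma degExpS_mul (lam x y : ℝ) :
    degExpS lam x * degExpS lam y = degExpS lam (x + y) := by
  ext n
  rw [PowerSeries.coeff_mul]
  simp only [degExpS, PowerSeries.coeff_mk]
  rw [Finset.Nat.sum_antidiagonal_eq_sum_range_succ_mk, vandermonde x y lam n, Finset.sum_div]
  apply Finset.sum_congr rfl
  intro k hk
  have hk' : k ≤ n := Nat.lt_succ_iff.mp (Finset.mem_range.mp hk)
  have hfac : (n.choose k : ℝ) * ((k.factorial : ℝ)) * ((n-k).factorial : ℝ) = (n.factorial : ℝ) := by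
    rw [← Nat.cast_mul, ← Nat.cast_mul, Nat.choose_mul_factorial_mul_factorial hk']
  have h1 : (k.factorial : ℝ) ≠ 0 := Nat.cast_ne_zero.mpr (Nat.factorial_ne_zero k)
  have h2 : ((n-k).factorial : ℝ) ≠ 0 := Nat.cast_ne_zero.mpr (Nat.factorial_ne_zero _)
  have h3 : (n.factorial : ℝ) ≠ 0 := Nat.cast_ne_zero.mpr (Nat.factorial_ne_zero n)
  field_simp
  linear_combination (-(degFall x lam k * degFall y lam (n - k))) * hfac

lemma degExpS_zero (lam : ℝ) : degExpS lam 0 = 1 := by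
  ext n
  cases n with
  | zero => simp [degExpS, degFall]
  | succ m =>
    rw [PowerSeries.coeff_one]
    simp only [degExpS, PowerSeries.coeff_mk]
    have : degFall 0 lam (m+1) = 0 := by
      apply Finset.prod_eq_zero (Finset.mem_range.mpr (Nat.succ_pos m))
      simp
    simp [this]

lemma degExpS_pow (lam : ℝ) : ∀ N : ℕ, degExpS lam 1 ^ N = degExpS lam N
  | 0 => by rw [pow_zero, Nat.cast_zero, degExpS_zero]
  | (N + 1) => by
    rw [pow_succ, degExpS_pow lam N, degExpS_mul]
    push_cast
    rfl

lemma coeff_pow_sub_one_eq_zero (lam : ℝ) {n k : ℕ} (h : n < k) :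
    PowerSeries.coeff n ((degExpS lam 1 - 1) ^ k) = 0 := by
  have hX : (PowerSeries.X : PowerSeries ℝ) ∣ (degExpS lam 1 - 1) := by
    rw [PowerSeries.X_dvd_iff]
    simp [degExpS, degFall, PowerSeries.constantCoeff_mk]
  have := pow_dvd_pow_of_dvd hX k
  exact (PowerSeries.X_pow_dvd_iff.mp this) n h

lemma fall_natCast (N : ℕ) : ∀ k : ℕ, fall (N : ℝ) k = (N.descFactorial k : ℝ)
  | 0 => by simp [fall]
  | (k + 1) => by
    rw [show fall (N:ℝ) (k+1) = fall (N:ℝ) k * ((N:ℝ) - k) from Finset.prod_range_succ _ _,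
      fall_natCast N k, Nat.descFactorial_succ]
    rcases le_or_gt k N with h | h
    · push_cast [Nat.cast_sub h]
      ring
    · rw [Nat.descFactorial_eq_zero_iff_lt.mpr h]
      have : N - k = 0 := by omega
      rw [this]
      push_cast
      ring

lemma fall_div_factorial_natCast (N k : ℕ) :
    fall (N : ℝ) k / (k.factorial : ℝ) = (N.choose k : ℝ) := by
  rw [fall_natCast, Nat.descFactorial_eq_factorial_mul_choose]
  push_cast
  rw [mul_comm, mul_div_assoc, div_self (Nat.cast_ne_zero.mpr (Nat.factorial_ne_zero k)), mul_one]

lemma key_nat (lam : ℝ) (n N : ℕ) :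
    ∑ k ∈ Finset.range (n + 1), (N.choose k : ℝ) *
      PowerSeries.coeff n ((degExpS lam 1 - 1) ^ k) =
    degFall (N : ℝ) lam n / (n.factorial : ℝ) := by
  have hE : ((degExpS lam 1 - 1) + 1) ^ N = degExpS lam 1 ^ N := by ring_nf
  have expand := add_pow (degExpS lam 1 - 1) (1 : PowerSeries ℝ) N
  have hcoeff : PowerSeries.coeff n (degExpS lam 1 ^ N) =
      ∑ k ∈ Finset.range (N + 1), (N.choose k : ℝ) *
        PowerSeries.coeff n ((degExpS lam 1 - 1) ^ k) := by
    rw [← hE, expand, map_sum]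
    apply Finset.sum_congr rfl
    intro k hk
    rw [one_pow, mul_one]
    rw [show ((N.choose k : ℕ) : PowerSeries ℝ) = PowerSeries.C ((N.choose k : ℝ)) by
      push_cast; rfl]
    rw [mul_comm, PowerSeries.coeff_C_mul]
  have hrhs : PowerSeries.coeff n (degExpS lam 1 ^ N) = degFall (N:ℝ) lam n / n.factorial := by
    rw [degExpS_pow]
    simp [degExpS, PowerSeries.coeff_mk]
  -- both sums equal sum over range (max n N + 1)
  let M := max n N
  have hext : ∀ (m : ℕ), m ≤ M → ∑ k ∈ Finset.range (m + 1), (N.choose k : ℝ) *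
      PowerSeries.coeff n ((degExpS lam 1 - 1) ^ k) =
      ∑ k ∈ Finset.range (M + 1), (N.choose k : ℝ) *
      PowerSeries.coeff n ((degExpS lam 1 - 1) ^ k) → True := fun _ _ _ => trivial
  have h1 : ∑ k ∈ Finset.range (n + 1), (N.choose k : ℝ) *
      PowerSeries.coeff n ((degExpS lam 1 - 1) ^ k) =
      ∑ k ∈ Finset.range (M + 1), (N.choose k : ℝ) *
      PowerSeries.coeff n ((degExpS lam 1 - 1) ^ k) := by
    apply Finset.sum_subset
    · exact Finset.range_subset_range.mpr (by omega)
    · intro k hk hk'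
      have : n < k := by
        simp only [Finset.mem_range] at hk hk'
        omega
      rw [coeff_pow_sub_one_eq_zero lam this, mul_zero]
  have h2 : ∑ k ∈ Finset.range (N + 1), (N.choose k : ℝ) *
      PowerSeries.coeff n ((degExpS lam 1 - 1) ^ k) =
      ∑ k ∈ Finset.range (M + 1), (N.choose k : ℝ) *
      PowerSeries.coeff n ((degExpS lam 1 - 1) ^ k) := by
    apply Finset.sum_subset
    · exact Finset.range_subset_range.mpr (by omega)
    · intro k hk hk'
      have : N < k := by
        simp only [Finset.mem_range] at hk hk'
        omega
      rw [Nat.choose_eq_zero_of_lt this]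
      simp
  rw [h1, ← h2, ← hcoeff, hrhs]

lemma key (lam y : ℝ) (n : ℕ) :
    ∑ k ∈ Finset.range (n + 1), (fall y k / (k.factorial : ℝ)) *
      PowerSeries.coeff n ((degExpS lam 1 - 1) ^ k) =
    degFall y lam n / (n.factorial : ℝ) := by
  set p : Polynomial ℝ := ∑ k ∈ Finset.range (n + 1),
    Polynomial.C (PowerSeries.coeff n ((degExpS lam 1 - 1) ^ k) / (k.factorial : ℝ)) *
      ∏ j ∈ Finset.range k, (Polynomial.X - Polynomial.C (j : ℝ)) with hp
  set q : Polynomial ℝ := Polynomial.C (1 / (n.factorial : ℝ)) *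
      ∏ j ∈ Finset.range n, (Polynomial.X - Polynomial.C ((j : ℝ) * lam)) with hq
  have heval : ∀ t : ℝ, p.eval t = ∑ k ∈ Finset.range (n + 1),
      (fall t k / (k.factorial : ℝ)) *
        PowerSeries.coeff n ((degExpS lam 1 - 1) ^ k) := by
    intro t
    rw [hp, Polynomial.eval_finset_sum]
    apply Finset.sum_congr rfl
    intro k _
    rw [Polynomial.eval_mul, Polynomial.eval_C, Polynomial.eval_prod]
    simp only [Polynomial.eval_sub, Polynomial.eval_X, Polynomial.eval_C]
    rw [fall]
    ring
  have hevalq : ∀ t : ℝ, q.eval t = degFall t lam n / (n.factorial : ℝ) := by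
    intro t
    rw [hq, Polynomial.eval_mul, Polynomial.eval_C, Polynomial.eval_prod]
    simp only [Polynomial.eval_sub, Polynomial.eval_X, Polynomial.eval_C]
    rw [degFall]
    ring
  have hpq : p = q := by
    apply Polynomial.eq_of_infinite_eval_eq
    apply Set.Infinite.mono (s := Set.range (Nat.cast : ℕ → ℝ))
    · rintro _ ⟨N, rfl⟩
      show p.eval _ = q.eval _
      rw [heval, hevalq]
      rw [← key_nat lam n N]
      apply Finset.sum_congr rfl
      intro k _
      rw [fall_div_factorial_natCast]
    · exact Set.infinite_range_of_injective Nat.cast_injective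
  have := congrArg (Polynomial.eval y) hpq
  rw [heval, hevalq] at this
  exact this

theorem sum_degStirling2_eq_degFall (lam x y : ℝ) (n : ℕ) :
    ∑ k ∈ Finset.range (n + 1), degStirling2 lam x n k * fall y k =
      degFall (x + y) lam n := by
  set A := degExpS lam 1 - 1 with hA
  set S : PowerSeries ℝ := ∑ k ∈ Finset.range (n + 1),
    PowerSeries.C (fall y k / (k.factorial : ℝ)) * A ^ k with hS
  have hcoeffS : ∀ a, a ≤ n → PowerSeries.coeff a S = degFall y lam a / (a.factorial : ℝ) := by
    intro a ha
    rw [hS, map_sum]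
    simp only [PowerSeries.coeff_C_mul]
    rw [← key lam y a]
    symm
    apply Finset.sum_subset (Finset.range_subset_range.mpr (by omega))
    intro k hk hk'
    have hlt : a < k := by simp only [Finset.mem_range] at hk hk'; omega
    rw [coeff_pow_sub_one_eq_zero lam hlt, mul_zero]
  have hmain : PowerSeries.coeff n (S * degExpS lam x) =
      degFall (x + y) lam n / (n.factorial : ℝ) := by
    rw [PowerSeries.coeff_mul]
    have hc : ∀ p ∈ Finset.HasAntidiagonal.antidiagonal n,
        PowerSeries.coeff p.1 S * PowerSeries.coeff p.2 (degExpS lam x) =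
        PowerSeries.coeff p.1 (degExpS lam y) * PowerSeries.coeff p.2 (degExpS lam x) := by
      intro p hp
      have hple : p.1 ≤ n := by
        have := Finset.HasAntidiagonal.mem_antidiagonal.mp hp
        omega
      rw [hcoeffS p.1 hple]
      simp [degExpS, PowerSeries.coeff_mk]
    rw [Finset.sum_congr rfl hc, ← PowerSeries.coeff_mul, degExpS_mul, add_comm y x]
    simp [degExpS, PowerSeries.coeff_mk]
  have hterm : ∀ k, degStirling2 lam x n k * fall y k =
      (n.factorial : ℝ) * PowerSeries.coeff n
        (PowerSeries.C (fall y k / (k.factorial : ℝ)) * A ^ k * degExpS lam x) := by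
    intro k
    rw [degStirling2, ← hA]
    rw [mul_assoc (PowerSeries.C (1 / (k.factorial : ℝ))),
      mul_assoc (PowerSeries.C (fall y k / (k.factorial : ℝ)))]
    rw [PowerSeries.coeff_C_mul, PowerSeries.coeff_C_mul]
    ring
  rw [Finset.sum_congr rfl (fun k _ => hterm k), ← Finset.mul_sum, ← map_sum, ← Finset.sum_mul,
    ← hS, hmain]
  field_simp
end
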